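/- Let R and S be relations on the finite type Fin K, both having irreflexive transitive closure (i.e. both encoding DAGs). Suppose R and S have the same skeleton, i.e. for all i j, (R i j ∨ R j i) ↔ (S i j ∨ S j i), and the same ancestor relation, i.e. Relation.TransGen R = Relation.TransGen S. Then R = S. (Knowing the skeleton of the ground-truth causal DAG, checking for all pairs (i, j) whether z_i is an ancestor of z_j yields all edge orientations, so ancestor information determines the DAG given its skeleton.) -/
import Mathlib


/-- Two DAGs on `Fin K` (relations with irreflexive transitive closure) with the same
skeleton and the same ancestor relation (transitive closure) are equal: ancestor
information determines all edge orientations given the skeleton. -/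
theorem dag_determined_by_skeleton_and_ancestors {K : ℕ}
    (R S : Fin K → Fin K → Prop)
    (hR : Irreflexive (Relation.TransGen R))
    (hS : Irreflexive (Relation.TransGen S))
    (hskel : ∀ i j, (R i j ∨ R j i) ↔ (S i j ∨ S j i))
    (hanc : Relation.TransGen R = Relation.TransGen S) :
    R = S := by
  funext i j
  ext
  constructor
  · intro h
    rcases (hskel i j).mp (Or.inl h) with hs | hs
    · exact hs
    · exact absurd ((Relation.TransGen.single h).trans
        (hanc ▸ Relation.TransGen.single hs)) (hR i)
  · intro h
    rcases (hskel i j).mpr (Or.inl h) with hr | hr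
    · exact hr
    · exact absurd ((Relation.TransGen.single h).trans
        (hanc ▸ Relation.TransGen.single hr)) (hS i)
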